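/- Let ω ∈ ℂ satisfy ω³ = 1 and ω ≠ 1. For u ∈ ℂ define the 2×2 complex matrix A(u) = (1/√6)·[[1−u, 1−ωu], [√2, √2·ω²]] and the 1×2 complex matrix B(u) = (1/√6)·[1+u, 1+ωu]. Then for every u ∈ ℂ with ω + u ≠ 0, B(u) = φ(u)·A(u), where φ(u) is the 1×2 complex matrix [(ω−u)/(ω+u), −√2·ω²·u/(ω+u)]. -/

import Mathlib

open Matrix

/-- The 2×2 matrix-valued function `A` from the example. -/
noncomputable def exA (ω u : ℂ) : Matrix (Fin 2) (Fin 2) ℂ :=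
  ((Real.sqrt 6 : ℂ))⁻¹ •
    !![1 - u, 1 - ω * u; (Real.sqrt 2 : ℂ), (Real.sqrt 2 : ℂ) * ω ^ 2]

/-- The 1×2 matrix-valued function `B` from the example. -/
noncomputable def exB (ω u : ℂ) : Matrix (Fin 1) (Fin 2) ℂ :=
  ((Real.sqrt 6 : ℂ))⁻¹ • !![1 + u, 1 + ω * u]

/-- The 1×2 matrix-valued function `φ = B A⁻¹` from the example. -/
noncomputable def exφ (ω u : ℂ) : Matrix (Fin 1) (Fin 2) ℂ :=
  !![(ω - u) / (ω + u), -(Real.sqrt 2 : ℂ) * ω ^ 2 * u / (ω + u)]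

theorem stmt11 (ω : ℂ) (hω3 : ω ^ 3 = 1) (hω1 : ω ≠ 1) :
    ∀ u : ℂ, ω + u ≠ 0 → exB ω u = exφ ω u * exA ω u := by
  intro u hu
  have hq : ω ^ 2 + ω + 1 = 0 := by
    have : (ω - 1) * (ω ^ 2 + ω + 1) = 0 := by linear_combination hω3
    rcases mul_eq_zero.mp this with h | h
    · exact absurd (sub_eq_zero.mp h) hω1
    · exact h
  have h2 : (Real.sqrt 2 : ℂ) * (Real.sqrt 2 : ℂ) = 2 := by
    rw [← Complex.ofReal_mul, Real.mul_self_sqrt (by norm_num)]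
    norm_num
  have h6 : (Real.sqrt 6 : ℂ) ≠ 0 := by
    simp [Real.sqrt_eq_zero']
  ext i j
  fin_cases i <;> fin_cases j <;>
    simp [exA, exB, exφ, Matrix.mul_apply, Fin.sum_univ_two] <;>
    field_simp <;>
    first
    | linear_combination (u * 2) * hq +
        (u * ω ^ 2) * h2
    | linear_combination (u * 2) * hq +
        (ω ^ 4 * u) * h2 + (2 * u * ω) * hω3
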